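/- arXiv:2001.04347 — 3 statements merged into one kernel-verified Lean document; each statement's English description precedes it below -/
import Mathlib

section
/- (Decisiveness criterion.) Let T = (S, Σ, κ) be a stochastic transition system, let B ∈ Σ, and let A ∈ Σ be an attractor for T. Let A' = A ∩ (S ∖ B̃) be the set of states of A from which B is reachable with positive probability. If there exists p > 0 such that for every ν ∈ Dist(A'), Prob_ν(F B) ≥ p, then T is decisive with respect to B. -/
open MeasureTheory ProbabilityTheory Filter Set ENNReal

namespace STS

variable {S : Type*} [MeasurableSpace S]

/-- The finite-dimensional distributions of the Markov chain with initial distribution `μ`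
and transition kernel `κ`: `finDist κ μ n` is the joint law of the first `n+1` states. -/
noncomputable def finDist (κ : Kernel S S) (μ : Measure S) : (n : ℕ) → Measure (Fin (n + 1) → S)
  | 0 => μ.map (fun s => fun _ => s)
  | n + 1 => (finDist κ μ n).bind (fun x => (κ (x (Fin.last n))).map (Fin.snoc x))

/-- `P` assigns to each initial probability distribution `μ` the probability measure `Prob_μ`
on the space of runs `ℕ → S` (given by the Ionescu–Tulcea theorem), i.e. the unique probability
measure under which the coordinate process is a Markov chain with initial distribution `μ` and
transition kernel `κ`.  This is characterized by the finite-dimensional distributions. -/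
def IsMarkovMeasureFamily (κ : Kernel S S) (P : Measure S → Measure (ℕ → S)) : Prop :=
  ∀ μ : Measure S, IsProbabilityMeasure μ →
    IsProbabilityMeasure (P μ) ∧
    ∀ n : ℕ, (P μ).map (fun ω (i : Fin (n + 1)) => ω i.1) = finDist κ μ n

/-- `F B`: the set of runs that visit `B` at some point. -/
def FEv (B : Set S) : Set (ℕ → S) := {ω | ∃ k, ω k ∈ B}

/-- `F^{≤n} B`: the set of runs that visit `B` within `n` steps. -/
def FLe (n : ℕ) (B : Set S) : Set (ℕ → S) := {ω | ∃ k ≤ n, ω k ∈ B}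

/-- `B' U B`: runs that stay in `B'` until a first visit to `B`. -/
def Until (B' B : Set S) : Set (ℕ → S) := {ω | ∃ k, ω k ∈ B ∧ ∀ j < k, ω j ∈ B'}

/-- `B' U^{≤n} B`: runs that stay in `B'` until a first visit to `B`, within `n` steps. -/
def UntilLe (n : ℕ) (B' B : Set S) : Set (ℕ → S) :=
  {ω | ∃ k ≤ n, ω k ∈ B ∧ ∀ j < k, ω j ∈ B'}

/-- `G B`: runs that always stay in `B`. -/
def Glob (B : Set S) : Set (ℕ → S) := {ω | ∀ k, ω k ∈ B}

/-- `GF B`: runs that visit `B` infinitely often. -/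
def GlobFEv (B : Set S) : Set (ℕ → S) := {ω | ∀ n : ℕ, ∃ k ≥ n, ω k ∈ B}

/-- The avoid-set `B̃` of `B`: states from which `B` is reached with probability `0`. -/
def avoidSet (P : Measure S → Measure (ℕ → S)) (B : Set S) : Set S :=
  {s : S | P (Measure.dirac s) (FEv B) = 0}

/-- The STS is decisive w.r.t. `B`: from any initial distribution, almost surely either `B` or
its avoid-set `B̃` is eventually visited. -/
def Decisive (P : Measure S → Measure (ℕ → S)) (B : Set S) : Prop :=
  ∀ μ : Measure S, IsProbabilityMeasure μ → P μ (FEv B ∪ FEv (avoidSet P B)) = 1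

/-- `A` is an attractor: it is reached almost surely from any initial distribution. -/
def IsAttractor (P : Measure S → Measure (ℕ → S)) (A : Set S) : Prop :=
  ∀ μ : Measure S, IsProbabilityMeasure μ → P μ (FEv A) = 1

lemma measurable_snoc {n : ℕ} (x : Fin (n+1) → S) :
    Measurable (fun z : S => (Fin.snoc x z : Fin (n+2) → S)) := by
  apply measurable_pi_lambda
  intro i
  induction i using Fin.lastCases with
  | last => simp; exact measurable_id
  | cast j => simpa using measurable_const

lemma measurable_snocFun (n : ℕ) :
    Measurable (fun p : (Fin (n+1) → S) × S => (Fin.snoc p.1 p.2 : Fin (n+2) → S)) := by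
  apply measurable_pi_lambda
  intro i
  induction i using Fin.lastCases with
  | last => simpa using measurable_snd
  | cast j => simp; exact (measurable_pi_apply j).comp measurable_fst

variable (κ : Kernel S S) [IsMarkovKernel κ]

lemma measurable_step (n : ℕ) :
    Measurable (fun x : Fin (n+1) → S =>
      ((κ (x (Fin.last n))).map (Fin.snoc x) : Measure (Fin (n+2) → S))) := by
  apply Measure.measurable_of_measurable_coe
  intro t ht
  have h1 : ∀ x : Fin (n+1) → S, (κ (x (Fin.last n))).map (Fin.snoc x) t
      = κ (x (Fin.last n)) {z | (Fin.snoc x z : Fin (n+2) → S) ∈ t} := by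
    intro x
    rw [Measure.map_apply (measurable_snoc x) ht]
    rfl
  simp_rw [h1]
  have : Measurable fun x : Fin (n+1) → S =>
      (κ.comap (fun x : Fin (n+1) → S => x (Fin.last n)) (measurable_pi_apply _)) x
        {z | (x, z) ∈ (fun p : (Fin (n+1) → S) × S => (Fin.snoc p.1 p.2 : Fin (n+2) → S)) ⁻¹' t} :=
    ProbabilityTheory.Kernel.measurable_kernel_prodMk_left ((measurable_snocFun n) ht)
  simpa [Kernel.comap_apply] using this

lemma finDist_zero (μ : Measure S) : finDist κ μ 0 = μ.map (fun s => fun _ => s) := rfl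
lemma finDist_succ (μ : Measure S) (n : ℕ) :
    finDist κ μ (n+1) = (finDist κ μ n).bind (fun x => (κ (x (Fin.last n))).map (Fin.snoc x)) := rfl

lemma measurable_constFun : Measurable (fun s : S => (fun _ : Fin 1 => s)) :=
  measurable_pi_lambda _ fun _ => measurable_id

instance finDist_prob (μ : Measure S) [IsProbabilityMeasure μ] (n : ℕ) :
    IsProbabilityMeasure (finDist κ μ n) := by
  induction n with
  | zero =>
    refine ⟨?_⟩
    rw [finDist_zero, Measure.map_apply measurable_constFun MeasurableSet.univ]
    simp
  | succ n ih =>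
    constructor
    rw [finDist_succ, Measure.bind_apply MeasurableSet.univ (measurable_step κ n).aemeasurable]
    have : ∀ x : Fin (n+1) → S, ((κ (x (Fin.last n))).map (Fin.snoc x) : Measure (Fin (n+2) → S)) univ = 1 := by
      intro x
      rw [Measure.map_apply (measurable_snoc x) MeasurableSet.univ]
      simp
    simp [this]

lemma lintegral_finDist_succ (μ : Measure S) (n : ℕ) {g : (Fin (n+2) → S) → ℝ≥0∞}
    (hg : Measurable g) :
    ∫⁻ v, g v ∂ finDist κ μ (n+1)
      = ∫⁻ x, ∫⁻ z, g (Fin.snoc x z) ∂ κ (x (Fin.last n)) ∂ finDist κ μ n := by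
  rw [finDist_succ, MeasureTheory.Measure.lintegral_bind (measurable_step κ n).aemeasurable hg.aemeasurable]
  congr 1
  ext x
  rw [lintegral_map hg (measurable_snoc x)]

lemma lintegral_finDist_zero (μ : Measure S) {g : (Fin 1 → S) → ℝ≥0∞} (hg : Measurable g) :
    ∫⁻ v, g v ∂ finDist κ μ 0 = ∫⁻ s, g (fun _ => s) ∂ μ := by
  rw [finDist_zero, lintegral_map hg measurable_constFun]

lemma measurable_lintegral_finDist_dirac (n : ℕ) :
    ∀ {g : (Fin (n+1) → S) → ℝ≥0∞}, Measurable g →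
      Measurable (fun s : S => ∫⁻ y, g y ∂ finDist κ (Measure.dirac s) n) := by
  induction n with
  | zero =>
    intro g hg
    have : ∀ s : S, ∫⁻ y, g y ∂ finDist κ (Measure.dirac s) 0 = g (fun _ => s) := by
      intro s
      have hm : Measurable fun s : S => g (fun _ => s) := hg.comp measurable_constFun
      rw [lintegral_finDist_zero κ _ hg, lintegral_dirac' _ hm]
    simp_rw [this]
    exact hg.comp measurable_constFun
  | succ n ih =>
    intro g hg
    have hG : Measurable (fun x : Fin (n+1) → S =>
        ∫⁻ z, g (Fin.snoc x z) ∂ (κ.comap (fun x : Fin (n+1) → S => x (Fin.last n))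
          (measurable_pi_apply _)) x) := by
      apply Measurable.lintegral_kernel_prod_right
      exact hg.comp (measurable_snocFun n)
    have : ∀ s : S, ∫⁻ y, g y ∂ finDist κ (Measure.dirac s) (n+1)
        = ∫⁻ x, (fun x => ∫⁻ z, g (Fin.snoc x z) ∂ (κ.comap (fun x : Fin (n+1) → S => x (Fin.last n)) (measurable_pi_apply _)) x) x ∂ finDist κ (Measure.dirac s) n := by
      intro s
      rw [lintegral_finDist_succ κ _ _ hg]
      simp_rw [Kernel.comap_apply]
    simp_rw [this]
    exact ih hG

def fr (n m : ℕ) (x : Fin (n+m+1) → S) : Fin (n+1) → S := fun i => x ⟨i.1, by omega⟩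
def bk (n m : ℕ) (x : Fin (n+m+1) → S) : Fin (m+1) → S := fun j => x ⟨n + j.1, by omega⟩

lemma measurable_fr (n m : ℕ) : Measurable (fr (S := S) n m) :=
  measurable_pi_lambda _ fun i => measurable_pi_apply _

lemma measurable_bk (n m : ℕ) : Measurable (bk (S := S) n m) :=
  measurable_pi_lambda _ fun j => measurable_pi_apply _

lemma fr_zero (n : ℕ) (x : Fin (n+0+1) → S) : fr n 0 x = x := by
  funext i
  exact congrArg x (Fin.ext rfl)

lemma bk_zero (n : ℕ) (x : Fin (n+0+1) → S) :
    bk n 0 x = fun _ : Fin 1 => x (Fin.last (n+0)) := by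
  funext j
  have hj : j = 0 := Fin.ext (by omega)
  subst hj
  exact congrArg x (Fin.ext rfl)

lemma fr_snoc (n m : ℕ) (x : Fin (n+m+1) → S) (z : S) :
    fr n (m+1) (Fin.snoc x z) = fr n m x := by
  funext i
  show (Fin.snoc x z : Fin (n+m+2) → S) ⟨i.1, by omega⟩ = x ⟨i.1, by omega⟩
  have h : (⟨i.1, by omega⟩ : Fin (n+m+2)) = Fin.castSucc ⟨i.1, by omega⟩ := Fin.ext rfl
  rw [h, Fin.snoc_castSucc]

lemma bk_snoc (n m : ℕ) (x : Fin (n+m+1) → S) (z : S) :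
    bk n (m+1) (Fin.snoc x z) = Fin.snoc (bk n m x) z := by
  funext j
  induction j using Fin.lastCases with
  | last =>
    show (Fin.snoc x z : Fin (n+m+2) → S) ⟨n + (m+1), by omega⟩ = _
    have h : (⟨n + (m+1), by omega⟩ : Fin (n+m+2)) = Fin.last (n+m+1) := Fin.ext rfl
    rw [h, Fin.snoc_last, Fin.snoc_last]
  | cast j =>
    show (Fin.snoc x z : Fin (n+m+2) → S) ⟨n + (Fin.castSucc j).1, by omega⟩ = _
    have h : (⟨n + (Fin.castSucc j).1, by omega⟩ : Fin (n+m+2))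
        = Fin.castSucc ⟨n + j.1, by omega⟩ := Fin.ext rfl
    rw [h, Fin.snoc_castSucc, Fin.snoc_castSucc]
    rfl

lemma bk_last (n m : ℕ) (x : Fin (n+m+1) → S) :
    x (Fin.last (n+m)) = bk n m x (Fin.last m) := congrArg x (Fin.ext rfl)

lemma splitting (μ : Measure S) [IsProbabilityMeasure μ] (m : ℕ) :
    ∀ (n : ℕ) (C : Set (Fin (n+1) → S)), MeasurableSet C →
    ∀ (g : (Fin (m+1) → S) → ℝ≥0∞), Measurable g →
    ∫⁻ x in {x | fr n m x ∈ C}, g (bk n m x) ∂ finDist κ μ (n + m)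
      = ∫⁻ y in C, (∫⁻ z, g z ∂ finDist κ (Measure.dirac (y (Fin.last n))) m)
          ∂ finDist κ μ n := by
  induction m with
  | zero =>
    intro n C hC g hg
    have h1 : {x : Fin (n+0+1) → S | fr n 0 x ∈ C} = C := by
      ext x; simp [fr_zero]
    have h2 : ∀ x : Fin (n+0+1) → S, g (bk n 0 x) = g (fun _ => x (Fin.last (n+0))) := by
      intro x; rw [bk_zero]
    have h3 : ∀ s : S, (∫⁻ z, g z ∂ finDist κ (Measure.dirac s) 0) = g (fun _ => s) := by
      intro s
      have hm : Measurable fun s : S => g (fun _ => s) := hg.comp measurable_constFun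
      rw [lintegral_finDist_zero κ _ hg, lintegral_dirac' _ hm]
    simp_rw [h1, h2, h3]
    rfl
  | succ m ih =>
    intro n C hC g hg
    -- LHS
    have hGmeas : Measurable (fun y : Fin (m+1) → S =>
        ∫⁻ z, g (Fin.snoc y z) ∂ (κ.comap (fun y : Fin (m+1) → S => y (Fin.last m))
          (measurable_pi_apply _)) y) := by
      apply Measurable.lintegral_kernel_prod_right
      exact hg.comp (measurable_snocFun m)
    set G : (Fin (m+1) → S) → ℝ≥0∞ :=
      fun y => ∫⁻ z, g (Fin.snoc y z) ∂ κ (y (Fin.last m)) with hGdef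
    have hGmeas' : Measurable G := by
      have : G = fun y : Fin (m+1) → S =>
          ∫⁻ z, g (Fin.snoc y z) ∂ (κ.comap (fun y : Fin (m+1) → S => y (Fin.last m))
            (measurable_pi_apply _)) y := by
        funext y; rw [hGdef]; simp [Kernel.comap_apply]
      rw [this]; exact hGmeas
    have key : ∫⁻ x in {x | fr n (m+1) x ∈ C}, g (bk n (m+1) x) ∂ finDist κ μ (n + (m+1))
        = ∫⁻ x in {x | fr n m x ∈ C}, G (bk n m x) ∂ finDist κ μ (n + m) := by
      have hset : MeasurableSet {x : Fin (n+(m+1)+1) → S | fr n (m+1) x ∈ C} :=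
        measurable_fr n (m+1) hC
      have hsm : MeasurableSet {x : Fin (n+m+1) → S | fr n m x ∈ C} :=
        measurable_fr n m hC
      rw [← lintegral_indicator hset, ← lintegral_indicator hsm]
      have hind : Measurable ({x : Fin (n+(m+1)+1) → S | fr n (m+1) x ∈ C}.indicator
          (fun x => g (bk n (m+1) x))) :=
        ((hg.comp (measurable_bk n (m+1))).indicator hset)
      refine (lintegral_finDist_succ κ μ (n+m) hind).trans ?_
      congr 1
      funext x
      have hx : ∀ z : S, ({x : Fin (n+(m+1)+1) → S | fr n (m+1) x ∈ C}.indicator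
            (fun x => g (bk n (m+1) x))) (Fin.snoc x z)
          = ({x : Fin (n+m+1) → S | fr n m x ∈ C}.indicator
              (fun x => g (Fin.snoc (bk n m x) z))) x := by
        intro z
        by_cases h : fr n m x ∈ C
        · have h1 : (Fin.snoc x z : Fin (n+(m+1)+1) → S)
              ∈ {x : Fin (n+(m+1)+1) → S | fr n (m+1) x ∈ C} := by
            simpa [fr_snoc] using h
          have h2 : x ∈ {x : Fin (n+m+1) → S | fr n m x ∈ C} := h
          rw [Set.indicator_of_mem h1, Set.indicator_of_mem h2, bk_snoc]
        · have h1 : (Fin.snoc x z : Fin (n+(m+1)+1) → S)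
              ∉ {x : Fin (n+(m+1)+1) → S | fr n (m+1) x ∈ C} := by
            simpa [fr_snoc] using h
          have h2 : x ∉ {x : Fin (n+m+1) → S | fr n m x ∈ C} := h
          rw [Set.indicator_of_notMem h1, Set.indicator_of_notMem h2]
      simp_rw [hx]
      by_cases h : fr n m x ∈ C
      · have h2 : x ∈ {x : Fin (n+m+1) → S | fr n m x ∈ C} := h
        simp only [Set.indicator_of_mem h2]
        rw [bk_last n m x]
      · have h2 : x ∉ {x : Fin (n+m+1) → S | fr n m x ∈ C} := h
        simp only [Set.indicator_of_notMem h2]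
        simp
    rw [key, ih n C hC G hGmeas']
    congr 1
    funext y
    have : ∫⁻ z, g z ∂ finDist κ (Measure.dirac (y (Fin.last n))) (m+1)
        = ∫⁻ w, G w ∂ finDist κ (Measure.dirac (y (Fin.last n))) m := by
      rw [lintegral_finDist_succ κ _ m hg]
    exact this.symm

def projI (n : ℕ) (ω : ℕ → S) : Fin (n+1) → S := fun i => ω i.1
def shf (n : ℕ) (ω : ℕ → S) : ℕ → S := fun k => ω (n + k)

omit [IsMarkovKernel κ] in
lemma measurable_projI (n : ℕ) : Measurable (projI (S := S) n) :=
  measurable_pi_lambda _ fun _ => measurable_pi_apply _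

omit [IsMarkovKernel κ] in
lemma measurable_shf (n : ℕ) : Measurable (shf (S := S) n) :=
  measurable_pi_lambda _ fun _ => measurable_pi_apply _

def cylSet : Set (Set (ℕ → S)) :=
  {T | ∃ (n : ℕ) (R : Set (Fin (n+1) → S)), MeasurableSet R ∧ T = projI n ⁻¹' R}

lemma projI_prefix {a b : ℕ} (hab : a ≤ b) (R : Set (Fin (a+1) → S)) :
    projI a ⁻¹' R
      = projI b ⁻¹' ((fun x : Fin (b+1) → S => fun i : Fin (a+1) => x ⟨i.1, by omega⟩) ⁻¹' R) :=
  rfl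

lemma measurable_trunc {a b : ℕ} (hab : a ≤ b) :
    Measurable (fun x : Fin (b+1) → S => fun i : Fin (a+1) => x ⟨i.1, by omega⟩) :=
  measurable_pi_lambda _ fun _ => measurable_pi_apply _

lemma isPiSystem_cyl : IsPiSystem (cylSet (S := S)) := by
  rintro T1 ⟨n1, R1, hR1, rfl⟩ T2 ⟨n2, R2, hR2, rfl⟩ -
  refine ⟨max n1 n2,
    ((fun x : Fin (max n1 n2 + 1) → S => fun i : Fin (n1+1) => x ⟨i.1, by omega⟩) ⁻¹' R1)
      ∩ ((fun x : Fin (max n1 n2 + 1) → S => fun i : Fin (n2+1) => x ⟨i.1, by omega⟩) ⁻¹' R2),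
    ((measurable_trunc (le_max_left n1 n2)) hR1).inter
      ((measurable_trunc (le_max_right n1 n2)) hR2), ?_⟩
  rw [Set.preimage_inter, ← projI_prefix (le_max_left n1 n2),
    ← projI_prefix (le_max_right n1 n2)]

lemma generateFrom_cyl :
    (inferInstance : MeasurableSpace (ℕ → S)) = .generateFrom (cylSet (S := S)) := by
  apply le_antisymm
  · show (MeasurableSpace.pi : MeasurableSpace (ℕ → S)) ≤ _
    refine iSup_le fun k => ?_
    intro t ht
    obtain ⟨s, hs, rfl⟩ := ht
    exact MeasurableSpace.measurableSet_generateFrom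
      ⟨k, (fun x : Fin (k+1) → S => x (Fin.last k)) ⁻¹' s,
        measurable_pi_apply (Fin.last k) hs, rfl⟩
  · apply MeasurableSpace.generateFrom_le
    rintro T ⟨n, R, hR, rfl⟩
    exact measurable_projI n hR

variable (P : Measure S → Measure (ℕ → S))

lemma P_dirac_cyl (hP : IsMarkovMeasureFamily κ P) (s : S) (m : ℕ)
    {R : Set (Fin (m+1) → S)} (hR : MeasurableSet R) :
    P (Measure.dirac s) (projI m ⁻¹' R) = finDist κ (Measure.dirac s) m R := by
  rw [← (hP (Measure.dirac s) inferInstance).2 m]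
  exact (Measure.map_apply (measurable_projI m) hR).symm

lemma measurable_finDist_dirac_apply (m : ℕ) {R : Set (Fin (m+1) → S)} (hR : MeasurableSet R) :
    Measurable fun s : S => finDist κ (Measure.dirac s) m R := by
  have : (fun s : S => finDist κ (Measure.dirac s) m R)
      = fun s : S => ∫⁻ z, R.indicator (1 : (Fin (m+1) → S) → ℝ≥0∞) z
          ∂ finDist κ (Measure.dirac s) m := by
    funext s
    rw [lintegral_indicator_one hR]
  rw [this]
  exact measurable_lintegral_finDist_dirac κ m (measurable_one.indicator hR)

lemma measurable_P_dirac (hP : IsMarkovMeasureFamily κ P) :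
    ∀ ⦃E : Set (ℕ → S)⦄, MeasurableSet E → Measurable fun s : S => P (Measure.dirac s) E := by
  refine MeasurableSpace.induction_on_inter
    (C := fun E _ => Measurable fun s : S => P (Measure.dirac s) E)
    generateFrom_cyl isPiSystem_cyl ?_ ?_ ?_ ?_
  · simp only [measure_empty]
    exact measurable_const
  · rintro T ⟨m, R, hR, rfl⟩
    simp_rw [P_dirac_cyl κ P hP _ m hR]
    exact measurable_finDist_dirac_apply κ m hR
  · intro t ht hmeas
    have : ∀ s : S, P (Measure.dirac s) tᶜ = 1 - P (Measure.dirac s) t := by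
      intro s
      haveI := (hP (Measure.dirac s) inferInstance).1
      exact prob_compl_eq_one_sub ht
    simp_rw [this]
    exact measurable_const.sub hmeas
  · intro f hdisj hfm hmeas
    have : ∀ s : S, P (Measure.dirac s) (⋃ i, f i) = ∑' i, P (Measure.dirac s) (f i) := by
      intro s
      exact measure_iUnion hdisj hfm
    simp_rw [this]
    exact Measurable.ennreal_tsum hmeas

lemma measurable_P_dirac_shf (hP : IsMarkovMeasureFamily κ P) (n : ℕ) :
    Measurable fun ω : ℕ → S => P (Measure.dirac (ω n)) := by
  apply Measure.measurable_of_measurable_coe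
  intro E hE
  exact (measurable_P_dirac κ P hP hE).comp (measurable_pi_apply n)

lemma markov (hP : IsMarkovMeasureFamily κ P) (μ : Measure S) [IsProbabilityMeasure μ]
    (n : ℕ) {C : Set (Fin (n+1) → S)} (hC : MeasurableSet C)
    {E : Set (ℕ → S)} (hE : MeasurableSet E) :
    P μ (projI n ⁻¹' C ∩ shf n ⁻¹' E)
      = ∫⁻ ω in projI n ⁻¹' C, P (Measure.dirac (ω n)) E ∂ P μ := by
  haveI := (hP μ inferInstance).1
  have hCm : MeasurableSet (projI (S := S) n ⁻¹' C) := measurable_projI n hC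
  set ν := (P μ).restrict (projI n ⁻¹' C) with hν
  set ρ := ν.map (shf n) with hρ
  set σm := ν.bind (fun ω => P (Measure.dirac (ω n))) with hσ
  have hPprob : ∀ s : S, IsProbabilityMeasure (P (Measure.dirac s)) :=
    fun s => (hP (Measure.dirac s) inferInstance).1
  have key : ρ = σm := by
    haveI : IsFiniteMeasure ρ := by
      constructor
      rw [hρ, Measure.map_apply (measurable_shf n) MeasurableSet.univ]
      exact lt_of_le_of_lt (measure_mono (Set.subset_univ _)) (measure_lt_top _ _)
    refine MeasureTheory.ext_of_generate_finite _ (generateFrom_cyl) (isPiSystem_cyl) ?_ ?_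
    · rintro T ⟨m, R, hR, rfl⟩
      -- ρ value
      have hTm : MeasurableSet (projI (S := S) m ⁻¹' R) := measurable_projI m hR
      have hρT : ρ (projI m ⁻¹' R) = P μ (projI n ⁻¹' C ∩ shf n ⁻¹' (projI m ⁻¹' R)) := by
        rw [hρ, Measure.map_apply (measurable_shf n) hTm, hν,
          Measure.restrict_apply ((measurable_shf n) hTm), Set.inter_comm]
      have hsetEq : projI n ⁻¹' C ∩ shf n ⁻¹' (projI m ⁻¹' R)
          = projI (n+m) ⁻¹' (fr n m ⁻¹' C ∩ bk n m ⁻¹' R) := rfl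
      have hfrbk : MeasurableSet (fr (S := S) n m ⁻¹' C ∩ bk (S := S) n m ⁻¹' R) :=
        ((measurable_fr n m) hC).inter ((measurable_bk n m) hR)
      have hPval : P μ (projI (n+m) ⁻¹' (fr n m ⁻¹' C ∩ bk n m ⁻¹' R))
          = finDist κ μ (n+m) (fr n m ⁻¹' C ∩ bk n m ⁻¹' R) := by
        rw [← (hP μ inferInstance).2 (n+m)]
        exact (Measure.map_apply (measurable_projI (n+m)) hfrbk).symm
      have hsplit : finDist κ μ (n+m) (fr n m ⁻¹' C ∩ bk n m ⁻¹' R)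
          = ∫⁻ y in C, finDist κ (Measure.dirac (y (Fin.last n))) m R ∂ finDist κ μ n := by
        have hs := splitting κ μ m n C hC (R.indicator 1) (measurable_one.indicator hR)
        have hxeq : ∀ x : Fin (n+m+1) → S, R.indicator (1 : (Fin (m+1) → S) → ℝ≥0∞) (bk n m x)
            = (bk n m ⁻¹' R).indicator (1 : (Fin (n+m+1) → S) → ℝ≥0∞) x := by
          intro x
          by_cases hx : bk n m x ∈ R
          · rw [Set.indicator_of_mem hx,
              Set.indicator_of_mem (show x ∈ bk n m ⁻¹' R from hx)]
            rfl
          · rw [Set.indicator_of_notMem hx,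
              Set.indicator_of_notMem (show x ∉ bk n m ⁻¹' R from hx)]
        have h1 : ∫⁻ x in {x | fr n m x ∈ C}, R.indicator 1 (bk n m x)
              ∂ finDist κ μ (n+m)
            = finDist κ μ (n+m) (fr n m ⁻¹' C ∩ bk n m ⁻¹' R) := by
          simp_rw [hxeq]
          have h2 := lintegral_indicator_one (μ :=
            (finDist κ μ (n+m)).restrict {x | fr n m x ∈ C}) ((measurable_bk n m) hR)
          rw [h2, Measure.restrict_apply ((measurable_bk n m) hR), Set.inter_comm]
          rfl
        have h3 : ∫⁻ y in C, (∫⁻ z, R.indicator (1 : (Fin (m+1) → S) → ℝ≥0∞) z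
              ∂ finDist κ (Measure.dirac (y (Fin.last n))) m) ∂ finDist κ μ n
            = ∫⁻ y in C, finDist κ (Measure.dirac (y (Fin.last n))) m R ∂ finDist κ μ n := by
          congr 1
          funext y
          rw [lintegral_indicator_one hR]
        rw [← h1, hs, h3]
      -- σm value
      have hσT : σm (projI m ⁻¹' R)
          = ∫⁻ ω in projI n ⁻¹' C, finDist κ (Measure.dirac (ω n)) m R ∂ P μ := by
        rw [hσ, Measure.bind_apply hTm (measurable_P_dirac_shf κ P hP n).aemeasurable]
        rw [hν]
        congr 1
        funext ω
        exact P_dirac_cyl κ P hP (ω n) m hR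
      have hchg : ∫⁻ ω in projI n ⁻¹' C, finDist κ (Measure.dirac (ω n)) m R ∂ P μ
          = ∫⁻ y in C, finDist κ (Measure.dirac (y (Fin.last n))) m R ∂ finDist κ μ n := by
        have hf : Measurable fun x : Fin (n+1) → S =>
            (finDist κ (Measure.dirac (x (Fin.last n))) m) R :=
          (measurable_finDist_dirac_apply κ m hR).comp (measurable_pi_apply _)
        have hg : Measurable fun (ω : ℕ → S) (i : Fin (n+1)) => ω i.1 := measurable_projI n
        rw [← (hP μ inferInstance).2 n, setLIntegral_map hC hf hg]
        rfl
      rw [hρT, hsetEq, hPval, hsplit, hσT, hchg]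
    · -- univ
      rw [hρ, Measure.map_apply (measurable_shf n) MeasurableSet.univ,
        hσ, Measure.bind_apply MeasurableSet.univ (measurable_P_dirac_shf κ P hP n).aemeasurable]
      have : ∀ ω : ℕ → S, P (Measure.dirac (ω n)) Set.univ = 1 := fun ω => (hPprob (ω n)).measure_univ
      simp_rw [this, Set.preimage_univ, lintegral_one]
  have hρE : ρ E = P μ (projI n ⁻¹' C ∩ shf n ⁻¹' E) := by
    rw [hρ, Measure.map_apply (measurable_shf n) hE, hν,
      Measure.restrict_apply ((measurable_shf n) hE), Set.inter_comm]
  have hσE : σm E = ∫⁻ ω in projI n ⁻¹' C, P (Measure.dirac (ω n)) E ∂ P μ := by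
    rw [hσ, Measure.bind_apply hE (measurable_P_dirac_shf κ P hP n).aemeasurable, hν]
  rw [← hρE, key, hσE]



/-- decisiveness criterion. If `A` is an attractor and there is `p > 0` such
that from every distribution concentrated on `A' = A ∩ B̃ᶜ` the probability of reaching `B` is
at least `p`, then the STS is decisive w.r.t. `B`. -/
theorem decisiveness_criterion
    (κ : Kernel S S) [IsMarkovKernel κ]
    (P : Measure S → Measure (ℕ → S)) (hP : IsMarkovMeasureFamily κ P)
    (B A : Set S) (hB : MeasurableSet B) (hA : MeasurableSet A)
    (hattr : IsAttractor P A)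
    (p : ℝ≥0∞) (hp : 0 < p)
    (hreach : ∀ ν : Measure S, IsProbabilityMeasure ν →
      ν (A ∩ (avoidSet P B)ᶜ) = 1 → p ≤ P ν (FEv B)) :
    Decisive P B := by
  classical
  have hFEv : ∀ {U : Set S}, MeasurableSet U → MeasurableSet (FEv U) := by
    intro U hU
    have : FEv U = ⋃ k, (fun ω : ℕ → S => ω k) ⁻¹' U := by ext ω; simp [FEv]
    rw [this]
    exact MeasurableSet.iUnion fun k => (measurable_pi_apply k) hU
  have hGlob : ∀ {U : Set S}, MeasurableSet U → MeasurableSet (Glob U) := by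
    intro U hU
    have : Glob U = ⋂ k, (fun ω : ℕ → S => ω k) ⁻¹' U := by ext ω; simp [Glob]
    rw [this]
    exact MeasurableSet.iInter fun k => (measurable_pi_apply k) hU
  have hGF : ∀ {U : Set S}, MeasurableSet U → MeasurableSet (GlobFEv U) := by
    intro U hU
    have : GlobFEv U = ⋂ n, ⋃ k, ⋃ (_ : k ≥ n), (fun ω : ℕ → S => ω k) ⁻¹' U := by
      ext ω; simp [GlobFEv]
    rw [this]
    exact MeasurableSet.iInter fun n => MeasurableSet.iUnion fun k =>
      MeasurableSet.iUnion fun _ => (measurable_pi_apply k) hU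
  have hBtm : MeasurableSet (avoidSet P B) := by
    have : avoidSet P B = (fun s => P (Measure.dirac s) (FEv B)) ⁻¹' {0} := rfl
    rw [this]
    exact (measurable_P_dirac κ P hP (hFEv hB)) (measurableSet_singleton 0)
  set A' : Set S := A ∩ (avoidSet P B)ᶜ with hA'def
  have hA' : MeasurableSet A' := hA.inter hBtm.compl
  set D : Set (ℕ → S) := Glob Bᶜ ∩ GlobFEv A' with hDdef
  have hD : MeasurableSet D := (hGlob hB.compl).inter (hGF hA')
  have hPdprob : ∀ s : S, IsProbabilityMeasure (P (Measure.dirac s)) :=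
    fun s => (hP _ inferInstance).1
  set M : ℝ≥0∞ := ⨆ t ∈ A', P (Measure.dirac t) D with hMdef
  have hMbound : ∀ s ∈ A', P (Measure.dirac s) D ≤ M := by
    intro s hs
    rw [hMdef]
    exact le_iSup₂ (f := fun t (_ : t ∈ A') => P (Measure.dirac t) D) s hs
  have hM1 : M ≤ 1 := by
    rw [hMdef]
    refine iSup₂_le fun t _ => ?_
    haveI := hPdprob t
    exact prob_le_one
  -- shift invariance of D
  have hshf : ∀ (k : ℕ) (ω : ℕ → S), ω ∈ D → shf k ω ∈ D := by
    intro k ω hω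
    refine ⟨fun j => hω.1 (k + j), fun n => ?_⟩
    obtain ⟨t, ht1, ht2⟩ := hω.2 (n + k)
    exact ⟨t - k, by omega, by
      show ω (k + (t - k)) ∈ A'
      rw [show k + (t - k) = t by omega]
      exact ht2⟩
  -- Step 1: from any initial distribution, P ν D ≤ M
  have step1 : ∀ (ν : Measure S), IsProbabilityMeasure ν → P ν D ≤ M := by
    intro ν hν
    haveI := hν
    haveI := (hP ν hν).1
    set Q : (k : ℕ) → Set (Fin (k+1) → S) := fun k =>
      {x | x (Fin.last k) ∈ A' ∧ ∀ i : Fin (k+1), i.1 < k → x i ∉ A'} with hQdef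
    have hQm : ∀ k, MeasurableSet (Q k) := by
      intro k
      have hQeq : Q k = ((fun x : Fin (k+1) → S => x (Fin.last k)) ⁻¹' A')
          ∩ {x : Fin (k+1) → S | ∀ i : Fin (k+1), i.1 < k → x i ∉ A'} := rfl
      rw [hQeq]
      refine MeasurableSet.inter ((measurable_pi_apply _) hA') ?_
      have : {x : Fin (k+1) → S | ∀ i : Fin (k+1), i.1 < k → x i ∉ A'}
          = ⋂ i : Fin (k+1), {x : Fin (k+1) → S | i.1 < k → x i ∉ A'} := by
        ext x; simp
      rw [this]
      refine MeasurableSet.iInter fun i => ?_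
      by_cases hik : i.1 < k
      · have : {x : Fin (k+1) → S | i.1 < k → x i ∉ A'} = (fun x : Fin (k+1) → S => x i) ⁻¹' A'ᶜ := by
          ext x; simp [hik]
        rw [this]
        exact (measurable_pi_apply i) hA'.compl
      · have : {x : Fin (k+1) → S | i.1 < k → x i ∉ A'} = Set.univ := by
          ext x; simp [hik]
        rw [this]
        exact MeasurableSet.univ
    have hsub : D ⊆ ⋃ k, (projI k ⁻¹' Q k ∩ shf k ⁻¹' D) := by
      intro ω hω
      have hex : ∃ k, ω k ∈ A' := by
        obtain ⟨t, _, ht⟩ := hω.2 0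
        exact ⟨t, ht⟩
      refine mem_iUnion.2 ⟨Nat.find hex, ⟨⟨Nat.find_spec hex, ?_⟩, hshf _ ω hω⟩⟩
      intro i hi
      exact Nat.find_min hex hi
    have hdisj : Pairwise (Function.onFun Disjoint fun k : ℕ => (projI k ⁻¹' Q k : Set (ℕ → S))) := by
      intro k l hkl
      refine Set.disjoint_left.2 fun ω hk hl => ?_
      rcases Nat.lt_or_ge k l with hlt | hge
      · exact (hl.2 ⟨k, by omega⟩ hlt) hk.1
      · have hlt : l < k := by omega
        exact (hk.2 ⟨l, by omega⟩ hlt) hl.1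
    calc P ν D ≤ P ν (⋃ k, (projI k ⁻¹' Q k ∩ shf k ⁻¹' D)) := measure_mono hsub
      _ ≤ ∑' k, P ν (projI k ⁻¹' Q k ∩ shf k ⁻¹' D) := measure_iUnion_le _
      _ = ∑' k, ∫⁻ ω in projI k ⁻¹' Q k, P (Measure.dirac (ω k)) D ∂ P ν :=
          tsum_congr fun k => markov κ P hP ν k (hQm k) hD
      _ ≤ ∑' k, M * P ν (projI k ⁻¹' Q k) := by
          refine ENNReal.tsum_le_tsum fun k => ?_
          calc ∫⁻ ω in projI k ⁻¹' Q k, P (Measure.dirac (ω k)) D ∂ P ν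
              ≤ ∫⁻ _ in projI k ⁻¹' Q k, M ∂ P ν := by
                refine setLIntegral_mono measurable_const fun ω hω => ?_
                exact hMbound (ω k) hω.1
            _ = M * P ν (projI k ⁻¹' Q k) := setLIntegral_const _ _
      _ = M * ∑' k, P ν (projI k ⁻¹' Q k) := ENNReal.tsum_mul_left
      _ ≤ M * 1 := by
          refine mul_le_mul_right ?_ M
          rw [← measure_iUnion hdisj (fun k => (measurable_projI k) (hQm k))]
          exact prob_le_one
      _ = M := mul_one M
  -- Step 2: for t ∈ A', P δ_t D ≤ M * (1 - p)
  have step2 : ∀ t ∈ A', P (Measure.dirac t) D ≤ M * (1 - p) := by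
    intro t ht
    haveI := hPdprob t
    set W : (n : ℕ) → Set (Fin (n+1) → S) := fun n => {x | ∀ i, x i ∉ B} with hW
    have hWm : ∀ n, MeasurableSet (W n) := by
      intro n
      have : W n = ⋂ i : Fin (n+1), (fun x : Fin (n+1) → S => x i) ⁻¹' Bᶜ := by
        ext x; simp [hW]
      rw [this]
      exact MeasurableSet.iInter fun i => (measurable_pi_apply i) hB.compl
    have hsub : ∀ n, D ⊆ projI n ⁻¹' W n ∩ shf n ⁻¹' D := by
      intro n ω hω
      exact ⟨fun i => hω.1 i.1, hshf n ω hω⟩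
    have hstep : ∀ n, P (Measure.dirac t) D ≤ M * P (Measure.dirac t) (projI n ⁻¹' W n) := by
      intro n
      calc P (Measure.dirac t) D
          ≤ P (Measure.dirac t) (projI n ⁻¹' W n ∩ shf n ⁻¹' D) := measure_mono (hsub n)
        _ = ∫⁻ ω in projI n ⁻¹' W n, P (Measure.dirac (ω n)) D ∂ P (Measure.dirac t) :=
            markov κ P hP _ n (hWm n) hD
        _ ≤ ∫⁻ _ in projI n ⁻¹' W n, M ∂ P (Measure.dirac t) :=
            setLIntegral_mono measurable_const fun ω _ =>
              step1 (Measure.dirac (ω n)) inferInstance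
        _ = M * P (Measure.dirac t) (projI n ⁻¹' W n) := setLIntegral_const _ _
    have hiInf : ⨅ n, P (Measure.dirac t) (projI n ⁻¹' W n) ≤ 1 - p := by
      have hiA : Antitone fun n => (projI n ⁻¹' W n : Set (ℕ → S)) := by
        intro a b hab ω hω i
        exact hω ⟨i.1, by omega⟩
      have hInter : ⋂ n, (projI n ⁻¹' W n : Set (ℕ → S)) = Glob Bᶜ := by
        ext ω
        constructor
        · intro hall k
          exact (mem_iInter.1 hall k) (Fin.last k)
        · intro hG
          exact mem_iInter.2 fun n i => hG i.1
      have hmi := hiA.measure_iInter (μ := P (Measure.dirac t))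
        (fun n => ((measurable_projI n) (hWm n)).nullMeasurableSet) ⟨0, measure_ne_top _ _⟩
      rw [hInter] at hmi
      rw [← hmi]
      have hGc : Glob Bᶜ = (FEv B)ᶜ := by ext ω; simp [Glob, FEv]
      rw [hGc, prob_compl_eq_one_sub (hFEv hB)]
      refine tsub_le_tsub_left (hreach (Measure.dirac t) inferInstance ?_) 1
      exact Measure.dirac_apply_of_mem ht
    have hMne : M ≠ ∞ := fun hMeq => by simp [hMeq] at hM1
    calc P (Measure.dirac t) D
        ≤ ⨅ n, M * P (Measure.dirac t) (projI n ⁻¹' W n) := le_iInf hstep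
      _ = M * ⨅ n, P (Measure.dirac t) (projI n ⁻¹' W n) :=
          (ENNReal.mul_iInf (fun hMeq => absurd hMeq hMne)).symm
      _ ≤ M * (1 - p) := mul_le_mul_right hiInf M
  -- Step 3: M = 0
  have hM0 : M = 0 := by
    by_contra hM0
    have hMne : M ≠ ∞ := fun hMeq => by simp [hMeq] at hM1
    have hMle : M ≤ M * (1 - p) := by
      conv_lhs => rw [hMdef]
      exact iSup₂_le step2
    have hlt : M * (1 - p) < M * 1 := by
      rw [ENNReal.mul_lt_mul_iff_right hM0 hMne]
      exact ENNReal.sub_lt_self one_ne_top one_ne_zero (ne_of_gt hp)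
    rw [mul_one] at hlt
    exact absurd (lt_of_le_of_lt hMle hlt) (lt_irrefl M)
  -- conclude
  intro μ hμ
  haveI := hμ
  haveI := (hP μ hμ).1
  have step4 : P μ ((GlobFEv A)ᶜ) = 0 := by
    have hsub : (GlobFEv A)ᶜ ⊆ ⋃ n, shf n ⁻¹' (Glob Aᶜ) := by
      intro ω hω
      have : ¬ ∀ n : ℕ, ∃ k ≥ n, ω k ∈ A := hω
      push_neg at this
      obtain ⟨n, hn⟩ := this
      exact mem_iUnion.2 ⟨n, fun k => hn (n + k) (by omega)⟩
    have hzero : ∀ n, P μ (shf n ⁻¹' (Glob Aᶜ)) = 0 := by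
      intro n
      have huniv : shf n ⁻¹' (Glob Aᶜ)
          = projI n ⁻¹' (Set.univ : Set (Fin (n+1) → S)) ∩ shf n ⁻¹' (Glob Aᶜ) := by
        simp
      rw [huniv, markov κ P hP μ n MeasurableSet.univ (hGlob hA.compl)]
      have hz : ∀ ω : ℕ → S, P (Measure.dirac (ω n)) (Glob Aᶜ) = 0 := by
        intro ω
        haveI := hPdprob (ω n)
        have hGc : Glob Aᶜ = (FEv A)ᶜ := by ext; simp [Glob, FEv]
        rw [hGc, prob_compl_eq_one_sub (hFEv hA), hattr (Measure.dirac (ω n)) inferInstance]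
        simp
      simp_rw [hz]
      simp
    refine le_antisymm ?_ (zero_le)
    calc P μ ((GlobFEv A)ᶜ) ≤ P μ (⋃ n, shf n ⁻¹' (Glob Aᶜ)) := measure_mono hsub
      _ ≤ ∑' n, P μ (shf n ⁻¹' (Glob Aᶜ)) := measure_iUnion_le _
      _ = 0 := by simp [hzero]
  have hDzero : P μ D = 0 :=
    le_antisymm ((step1 μ hμ).trans (le_of_eq hM0)) (zero_le)
  have hsub5 : (FEv B ∪ FEv (avoidSet P B))ᶜ ⊆ D ∪ (GlobFEv A)ᶜ := by
    intro ω hω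
    by_cases hGFA : ω ∈ GlobFEv A
    · left
      have hnB : ∀ k, ω k ∉ B := fun k hk => hω (Or.inl ⟨k, hk⟩)
      have hnBt : ∀ k, ω k ∉ avoidSet P B := fun k hk => hω (Or.inr ⟨k, hk⟩)
      refine ⟨hnB, fun n => ?_⟩
      obtain ⟨k, hk1, hk2⟩ := hGFA n
      exact ⟨k, hk1, hk2, hnBt k⟩
    · right
      exact hGFA
  have hcompl : P μ ((FEv B ∪ FEv (avoidSet P B))ᶜ) = 0 := by
    refine le_antisymm ?_ (zero_le)
    calc P μ ((FEv B ∪ FEv (avoidSet P B))ᶜ)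
        ≤ P μ (D ∪ (GlobFEv A)ᶜ) := measure_mono hsub5
      _ ≤ P μ D + P μ ((GlobFEv A)ᶜ) := measure_union_le _ _
      _ = 0 := by rw [hDzero, step4, add_zero]
  have hU : MeasurableSet (FEv B ∪ FEv (avoidSet P B)) := (hFEv hB).union (hFEv hBtm)
  exact (prob_compl_eq_zero_iff hU).1 hcompl

end STS
end

section
/- Consider the random-walk STS T on S = ℕ (with the discrete σ-algebra) whose Markov kernel satisfies κ(0, ·) = δ_1 and, for n ≥ 1, κ(n, ·) = p·δ_{n+1} + (1−p)·δ_{n−1}, where 1/2 < p < 1. Then Prob_{δ_1}(F {0}) < 1 and the avoid-set of B = {0} is empty (for every state s ∈ ℕ, Prob_{δ_s}(F {0}) > 0); consequently, Prob_{δ_1}(F B ∪ F B̃) < 1, i.e., T is not decisive with respect to B = {0}. -/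
open MeasureTheory ProbabilityTheory Filter Set ENNReal

namespace STS

variable {S : Type*} [MeasurableSpace S]

lemma measAll {n : ℕ} (A : Set (Fin (n + 1) → ℕ)) : MeasurableSet A :=
  (Set.to_countable A).measurableSet

open Classical in
noncomputable def psi (r : ℝ≥0∞) (n : ℕ) (x : Fin (n + 1) → ℕ) : ℝ≥0∞ :=
  if ∃ i, x i = 0 then 1 else r ^ (x (Fin.last n))

lemma harm (p : ℝ≥0∞) (h0 : p ≠ 0) (ht : p ≠ ⊤) (h1 : p ≤ 1) (m : ℕ) :
    p * ((1 - p) / p) ^ (m + 2) + (1 - p) * ((1 - p) / p) ^ m = ((1 - p) / p) ^ (m + 1) := by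
  set q := 1 - p with hq
  set r := q / p with hr
  have hcancel : p * p⁻¹ = 1 := ENNReal.mul_inv_cancel h0 ht
  have hqp : q + p = 1 := tsub_add_cancel_of_le h1
  have hrr : r = q * p⁻¹ := by rw [hr, div_eq_mul_inv]
  have key : p * (r * r) + q = r := by
    have h2 : p * (r * r) = q * q * p⁻¹ := by
      rw [hrr]
      calc p * (q * p⁻¹ * (q * p⁻¹)) = q * q * p⁻¹ * (p * p⁻¹) := by ring
        _ = q * q * p⁻¹ := by rw [hcancel, mul_one]
    rw [h2, hrr]
    calc q * q * p⁻¹ + q = q * q * p⁻¹ + q * (p * p⁻¹) := by rw [hcancel, mul_one]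
      _ = (q + p) * (q * p⁻¹) := by ring
      _ = q * p⁻¹ := by rw [hqp, one_mul]
  have h2 : r ^ (m + 2) = r ^ m * (r * r) := by ring
  have h1' : r ^ (m + 1) = r ^ m * r := by ring
  rw [h2, h1']
  calc p * (r ^ m * (r * r)) + q * r ^ m = r ^ m * (p * (r * r) + q) := by ring
    _ = r ^ m * r := by rw [key]

lemma psi_lintegral (κ : Kernel ℕ ℕ) [IsMarkovKernel κ]
    (p : ℝ≥0∞) (h0 : p ≠ 0) (ht : p ≠ ⊤) (h1 : p ≤ 1)
    (hκ : ∀ n : ℕ, κ (n + 1) = p • Measure.dirac (n + 2) + (1 - p) • Measure.dirac n)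
    (s : ℕ) : ∀ n, ∫⁻ x, psi ((1 - p) / p) n x ∂(finDist κ (Measure.dirac s) n)
      = ((1 - p) / p) ^ s := by
  set r := (1 - p) / p with hr
  intro n
  induction n with
  | zero =>
      show ∫⁻ x, psi r 0 x ∂((Measure.dirac s).map (fun t => fun _ => t)) = r ^ s
      rw [lintegral_map (measurable_of_countable _) (measurable_of_countable _),
        lintegral_dirac]
      by_cases hs : s = 0
      · subst hs; simp [psi]
      · have hc : ¬ ∃ i : Fin 1, (fun _ : Fin 1 => s) i = 0 := by
          rintro ⟨i, hi⟩; exact hs hi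
        simp [psi, hc]
  | succ n ih =>
      show ∫⁻ x, psi r (n + 1) x
          ∂((finDist κ (Measure.dirac s) n).bind
            (fun x => (κ (x (Fin.last n))).map (Fin.snoc x))) = r ^ s
      rw [Measure.lintegral_bind (measurable_of_countable _).aemeasurable (measurable_of_countable _).aemeasurable]
      have hpt : ∀ x : Fin (n + 1) → ℕ,
          ∫⁻ y, psi r (n + 1) y ∂((κ (x (Fin.last n))).map (Fin.snoc x)) = psi r n x := by
        intro x
        rw [lintegral_map (measurable_of_countable _) (measurable_of_countable _)]
        by_cases hx : ∃ i, x i = 0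
        · obtain ⟨i, hi⟩ := hx
          have h1' : ∀ t : ℕ, psi r (n + 1) (Fin.snoc x t) = 1 := by
            intro t
            have : ∃ j : Fin (n + 2), (Fin.snoc x t : Fin (n+2) → ℕ) j = 0 :=
              ⟨i.castSucc, by simpa [Fin.snoc_castSucc] using hi⟩
            simp [psi, this]
          have h2' : psi r n x = 1 := by unfold psi; exact if_pos ⟨i, hi⟩
          simp [h1', h2']
        · push_neg at hx
          obtain ⟨m, hm⟩ := Nat.exists_eq_succ_of_ne_zero (hx (Fin.last n))
          have hval : ∀ t : ℕ, psi r (n + 1) (Fin.snoc x t) = r ^ t := by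
            intro t
            have hc : (∃ j : Fin (n + 2), (Fin.snoc x t : Fin (n+2) → ℕ) j = 0) ↔ t = 0 := by
              constructor
              · rintro ⟨j, hj⟩
                induction j using Fin.lastCases with
                | last => rwa [Fin.snoc_last] at hj
                | cast i => rw [Fin.snoc_castSucc] at hj; exact absurd hj (hx i)
              · rintro rfl; exact ⟨Fin.last _, Fin.snoc_last _ _⟩
            by_cases htz : t = 0
            · subst htz; simp [psi, hc]
            · have : ¬ ∃ j : Fin (n + 2), (Fin.snoc x t : Fin (n+2) → ℕ) j = 0 := by
                rw [hc]; exact htz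
              simp [psi, this, Fin.snoc_last]
          simp only [hval]
          rw [hm, hκ m]
          rw [lintegral_add_measure, lintegral_smul_measure, lintegral_smul_measure,
            lintegral_dirac, lintegral_dirac]
          have hpsix : psi r n x = r ^ (m + 1) := by
            have : ¬ ∃ i, x i = 0 := by push_neg; exact hx
            simp only [psi, if_neg this, hm]
          rw [hpsix, hr]
          exact harm p h0 ht h1 m
      simp only [hpt]
      exact ih

lemma lower_bound (κ : Kernel ℕ ℕ) [IsMarkovKernel κ]
    (p : ℝ≥0∞)
    (hκ : ∀ n : ℕ, κ (n + 1) = p • Measure.dirac (n + 2) + (1 - p) • Measure.dirac n)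
    (s : ℕ) : ∀ n, n ≤ s → (1 - p) ^ n ≤
      finDist κ (Measure.dirac s) n {x : Fin (n + 1) → ℕ | ∀ i, x i = s - (i : ℕ)} := by
  intro n
  induction n with
  | zero =>
      intro _
      show (1 - p) ^ 0 ≤ ((Measure.dirac s).map (fun t => fun _ => t)) _
      rw [Measure.map_apply (measurable_of_countable _) (measAll _)]
      have hmem : s ∈ (fun t => fun _ : Fin 1 => t) ⁻¹' {x : Fin 1 → ℕ | ∀ i, x i = s - (i : ℕ)} := by
        intro i
        have : (i : ℕ) = 0 := Nat.lt_one_iff.mp i.isLt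
        simp [this]
      rw [Measure.dirac_apply_of_mem hmem, pow_zero]
  | succ n ih =>
      intro h
      have ihn := ih (by omega)
      have hfd : finDist κ (Measure.dirac s) (n + 1) = (finDist κ (Measure.dirac s) n).bind
        (fun x => (κ (x (Fin.last n))).map (Fin.snoc x)) := rfl
      rw [hfd, Measure.bind_apply (measAll _) (measurable_of_countable _).aemeasurable]
      have hpoint : ∀ x : Fin (n + 1) → ℕ,
          ({x : Fin (n + 1) → ℕ | ∀ i, x i = s - (i : ℕ)}).indicator (fun _ => 1 - p) x ≤
          ((κ (x (Fin.last n))).map (Fin.snoc x))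
            {y : Fin (n + 2) → ℕ | ∀ i, y i = s - (i : ℕ)} := by
        intro x
        by_cases hx : x ∈ {x : Fin (n + 1) → ℕ | ∀ i, x i = s - (i : ℕ)}
        · rw [Set.indicator_of_mem hx]
          rw [Measure.map_apply (measurable_of_countable _) (measAll _)]
          have hlast : x (Fin.last n) = s - n := by
            have := hx (Fin.last n); rwa [Fin.val_last] at this
          have hmem : s - (n + 1) ∈
              Fin.snoc x ⁻¹' {y : Fin (n + 2) → ℕ | ∀ i, y i = s - (i : ℕ)} := by
            intro j
            induction j using Fin.lastCases with
            | last => rw [Fin.snoc_last, Fin.val_last]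
            | cast i => rw [Fin.snoc_castSucc, Fin.coe_castSucc]; exact hx i
          calc 1 - p = (κ (x (Fin.last n))) {s - (n + 1)} := by
                rw [hlast, show s - n = (s - (n + 1)) + 1 by omega, hκ (s - (n + 1))]
                rw [Measure.add_apply, Measure.smul_apply, Measure.smul_apply,
                  Measure.dirac_apply, Measure.dirac_apply]
                have h1 : s - (n + 1) + 2 ∉ ({s - (n + 1)} : Set ℕ) := by
                  simp only [Set.mem_singleton_iff]; omega
                have h2 : s - (n + 1) ∈ ({s - (n + 1)} : Set ℕ) := rfl
                rw [Set.indicator_of_notMem h1, Set.indicator_of_mem h2]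
                simp
            _ ≤ _ := measure_mono (Set.singleton_subset_iff.mpr hmem)
        · rw [Set.indicator_of_notMem hx]; exact zero_le
      calc (1 - p) ^ (n + 1) = (1 - p) * (1 - p) ^ n := by rw [pow_succ, mul_comm]
        _ ≤ (1 - p) * finDist κ (Measure.dirac s) n
              {x : Fin (n + 1) → ℕ | ∀ i, x i = s - (i : ℕ)} := by
            exact mul_le_mul_right ihn _
        _ = ∫⁻ x, ({x : Fin (n + 1) → ℕ | ∀ i, x i = s - (i : ℕ)}).indicator
              (fun _ => 1 - p) x ∂(finDist κ (Measure.dirac s) n) := by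
            rw [lintegral_indicator_const (measAll _)]
        _ ≤ _ := lintegral_mono hpoint

/-- For the random walk on `ℕ` with parameter `1/2 < p < 1`, state `0` is
reached from `1` with probability `< 1`, the avoid-set of `{0}` is empty (every state reaches
`0` with positive probability); consequently `Prob_{δ_1}(F B ∪ F B̃) < 1` and the STS is not
decisive w.r.t. `B = {0}`. -/

theorem randomWalk_gt_half_not_decisive
    (κ : Kernel ℕ ℕ) [IsMarkovKernel κ]
    (p : ℝ≥0∞) (hp1 : 1 / 2 < p) (hp2 : p < 1)
    (hκ0 : κ 0 = Measure.dirac 1)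
    (hκ : ∀ n : ℕ, κ (n + 1) = p • Measure.dirac (n + 2) + (1 - p) • Measure.dirac n)
    (P : Measure ℕ → Measure (ℕ → ℕ)) (hP : IsMarkovMeasureFamily κ P) :
    P (Measure.dirac 1) (FEv {0}) < 1 ∧
      (∀ s : ℕ, 0 < P (Measure.dirac s) (FEv {0})) ∧
      avoidSet P ({0} : Set ℕ) = ∅ ∧
      P (Measure.dirac 1) (FEv {0} ∪ FEv (avoidSet P ({0} : Set ℕ))) < 1 ∧
      ¬ Decisive P ({0} : Set ℕ) := by
  have hp0 : p ≠ 0 := ((zero_le : (0 : ℝ≥0∞) ≤ 1 / 2).trans_lt hp1).ne'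
  have hpt : p ≠ ⊤ := ne_top_of_lt hp2
  set r : ℝ≥0∞ := (1 - p) / p with hr
  have hrestr : ∀ n : ℕ, Measurable (fun (ω : ℕ → ℕ) (i : Fin (n + 1)) => ω i.1) :=
    fun n => measurable_pi_lambda _ fun i => measurable_pi_apply _
  have hFLe : ∀ s n : ℕ, P (Measure.dirac s) (FLe n ({0} : Set ℕ))
      = finDist κ (Measure.dirac s) n {x : Fin (n + 1) → ℕ | ∃ i, x i = 0} := by
    intro s n
    have h := (hP (Measure.dirac s) inferInstance).2 n
    have hpre : (fun (ω : ℕ → ℕ) (i : Fin (n + 1)) => ω i.1) ⁻¹'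
        {x : Fin (n + 1) → ℕ | ∃ i, x i = 0} = FLe n ({0} : Set ℕ) := by
      ext ω
      simp only [Set.mem_preimage, Set.mem_setOf_eq, FLe, Set.mem_singleton_iff]
      constructor
      · rintro ⟨i, hi⟩; exact ⟨i.1, by omega, hi⟩
      · rintro ⟨k, hk, hk0⟩; exact ⟨⟨k, by omega⟩, hk0⟩
    rw [← h, Measure.map_apply (hrestr n) (measAll _), hpre]
  have hFEv : FEv ({0} : Set ℕ) = ⋃ n, FLe n ({0} : Set ℕ) := by
    ext ω
    simp only [FEv, FLe, Set.mem_iUnion, Set.mem_setOf_eq]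
    constructor
    · rintro ⟨k, hk⟩; exact ⟨k, k, le_refl k, hk⟩
    · rintro ⟨n, k, _, hk⟩; exact ⟨k, hk⟩
  have hmono : Monotone (fun n => FLe n ({0} : Set ℕ)) := by
    intro a b hab ω hω
    obtain ⟨k, hk, h0⟩ := hω
    exact ⟨k, hk.trans hab, h0⟩
  have hub : ∀ s : ℕ, P (Measure.dirac s) (FEv ({0} : Set ℕ)) ≤ r ^ s := by
    intro s
    rw [hFEv, hmono.measure_iUnion]
    refine iSup_le fun n => ?_
    rw [hFLe]
    calc finDist κ (Measure.dirac s) n {x : Fin (n + 1) → ℕ | ∃ i, x i = 0}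
        = ∫⁻ x, ({x : Fin (n + 1) → ℕ | ∃ i, x i = 0}).indicator 1 x
            ∂(finDist κ (Measure.dirac s) n) := (lintegral_indicator_one (measAll _)).symm
      _ ≤ ∫⁻ x, psi r n x ∂(finDist κ (Measure.dirac s) n) := by
          refine lintegral_mono fun x => ?_
          by_cases hx : ∃ i, x i = 0
          · rw [Set.indicator_of_mem
                (show x ∈ {x : Fin (n + 1) → ℕ | ∃ i, x i = 0} from hx), Pi.one_apply]
            unfold psi; rw [if_pos hx]
          · rw [Set.indicator_of_notMem
                (show x ∉ {x : Fin (n + 1) → ℕ | ∃ i, x i = 0} from hx)]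
            exact zero_le
      _ = r ^ s := psi_lintegral κ p hp0 hpt hp2.le hκ s n
  have hr1 : r < 1 := by
    rw [hr, ENNReal.div_lt_iff (Or.inl hp0) (Or.inl hpt), one_mul]
    calc 1 - p ≤ 1 - 1 / 2 := tsub_le_tsub_left hp1.le 1
      _ = 1 / 2 := by rw [ENNReal.sub_half one_ne_top]
      _ < p := hp1
  have part1 : P (Measure.dirac 1) (FEv ({0} : Set ℕ)) < 1 :=
    lt_of_le_of_lt (by simpa using hub 1) hr1
  have part2 : ∀ s : ℕ, 0 < P (Measure.dirac s) (FEv ({0} : Set ℕ)) := by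
    intro s
    have hW : {x : Fin (s + 1) → ℕ | ∀ i, x i = s - (i : ℕ)} ⊆
        {x : Fin (s + 1) → ℕ | ∃ i, x i = 0} := by
      intro x hx
      exact ⟨Fin.last s, by rw [hx (Fin.last s), Fin.val_last, Nat.sub_self]⟩
    have h1 := lower_bound κ p hκ s s (le_refl s)
    have h2 : (1 - p) ^ s ≤ P (Measure.dirac s) (FLe s ({0} : Set ℕ)) := by
      rw [hFLe]; exact h1.trans (measure_mono hW)
    have h3 : P (Measure.dirac s) (FLe s ({0} : Set ℕ))
        ≤ P (Measure.dirac s) (FEv ({0} : Set ℕ)) := by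
      refine measure_mono fun ω hω => ?_
      obtain ⟨k, _, h⟩ := hω
      exact ⟨k, h⟩
    have hpos : (0 : ℝ≥0∞) < (1 - p) ^ s := ENNReal.pow_pos (tsub_pos_of_lt hp2) s
    exact lt_of_lt_of_le hpos (h2.trans h3)
  have part3 : avoidSet P ({0} : Set ℕ) = ∅ := by
    ext s
    simp only [avoidSet, Set.mem_setOf_eq, Set.mem_empty_iff_false, iff_false]
    exact (part2 s).ne'
  have hFEvEmpty : FEv (∅ : Set ℕ) = ∅ := by ext ω; simp [FEv]
  have part4 : P (Measure.dirac 1) (FEv {0} ∪ FEv (avoidSet P ({0} : Set ℕ))) < 1 := by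
    rw [part3, hFEvEmpty, Set.union_empty]
    exact part1
  refine ⟨part1, part2, part3, part4, fun hdec => ?_⟩
  exact part4.ne (hdec (Measure.dirac 1) inferInstance)


end STS
end

section
/- Let T = (S, Σ, κ) be a stochastic transition system, μ an initial probability distribution on (S, Σ), and B ∈ Σ. Let (F_n)_{n∈ℕ} be the filtration on the run space S^ℕ where F_n is the σ-algebra generated by the first n+1 coordinate maps. Then for Prob_μ-almost every run ω: ω never visits B (i.e., ω ∈ G(S ∖ B)) if and only if the conditional expectation E[1_{F B} | F_n](ω) converges to 0 as n → ∞. -/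
open MeasureTheory ProbabilityTheory Filter Set ENNReal

namespace STS

variable {S : Type*} [MeasurableSpace S]

/-- Lévy's zero-one law for the run space. For `Prob_μ`-almost every run
`ω`: `ω` never visits `B` iff the conditional expectation of the indicator of `F B` given the
first `n+1` coordinates, evaluated at `ω`, converges to `0`. -/
theorem never_visits_iff_condexp_tendsto_zero
    (κ : Kernel S S) [IsMarkovKernel κ]
    (P : Measure S → Measure (ℕ → S)) (hP : IsMarkovMeasureFamily κ P)
    (B : Set S) (hB : MeasurableSet B)
    (μ : Measure S) (hμ : IsProbabilityMeasure μ)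
    (F : ℕ → MeasurableSpace (ℕ → S))
    (hF : ∀ n : ℕ, F n =
      MeasurableSpace.comap (fun ω (i : Fin (n + 1)) => ω i.1) inferInstance) :
    ∀ᵐ ω ∂(P μ),
      (ω ∈ Glob Bᶜ ↔
        Tendsto (fun n => ((P μ)[(FEv B).indicator (fun _ => (1 : ℝ)) | F n]) ω)
          atTop (nhds 0)) := by
  classical
  obtain ⟨hPprob, -⟩ := hP μ hμ
  set ν := P μ
  -- the filtration
  have hmeas_proj : ∀ n : ℕ, Measurable (fun (ω : ℕ → S) (i : Fin (n + 1)) => ω i.1) :=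
    fun n => measurable_pi_lambda _ fun i => measurable_pi_apply _
  have hle : ∀ n, F n ≤ (inferInstance : MeasurableSpace (ℕ → S)) := fun n => by
    rw [hF n]; exact (hmeas_proj n).comap_le
  have hmono : Monotone F := by
    intro n m hnm
    rw [hF n, hF m]
    have hfac : (fun (ω : ℕ → S) (i : Fin (n + 1)) => ω i.1) =
        (fun (x : Fin (m + 1) → S) (i : Fin (n + 1)) => x (Fin.castLE (by omega) i)) ∘
          (fun (ω : ℕ → S) (i : Fin (m + 1)) => ω i.1) := by
      funext ω; funext i; rfl
    rw [hfac, ← MeasurableSpace.comap_comp]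
    refine MeasurableSpace.comap_mono ?_
    exact (measurable_pi_lambda _ fun i => measurable_pi_apply _).comap_le
  set ℱ : Filtration ℕ (inferInstance : MeasurableSpace (ℕ → S)) :=
    ⟨F, hmono, hle⟩ with hℱ
  -- measurability of FEv B
  have hFEv_sup : MeasurableSet[⨆ n, ℱ n] (FEv B) := by
    have : FEv B = ⋃ k : ℕ, (fun ω : ℕ → S => ω k) ⁻¹' B := by
      ext ω; simp [FEv]
    rw [this]
    refine MeasurableSet.iUnion fun k => ?_
    have hk : MeasurableSet[ℱ k] ((fun ω : ℕ → S => ω k) ⁻¹' B) := by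
      show MeasurableSet[F k] _
      rw [hF k]
      have : (fun ω : ℕ → S => ω k) =
          (fun x : Fin (k + 1) → S => x (Fin.last k)) ∘
            (fun (ω : ℕ → S) (i : Fin (k + 1)) => ω i.1) := rfl
      rw [this]
      exact MeasurableSpace.measurableSet_comap.2
        ⟨(fun x : Fin (k + 1) → S => x (Fin.last k)) ⁻¹' B,
          measurable_pi_apply _ hB, rfl⟩
    exact (le_iSup ℱ k) _ hk
  have hFEv : MeasurableSet (FEv B) :=
    (iSup_le fun n => hle n) _ hFEv_sup
  have hg : Integrable ((FEv B).indicator (fun _ => (1 : ℝ))) ν :=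
    (integrable_const (1 : ℝ)).indicator hFEv
  have hgm : StronglyMeasurable[⨆ n, ℱ n] ((FEv B).indicator (fun _ => (1 : ℝ))) :=
    (stronglyMeasurable_const.indicator hFEv_sup)
  have hconv := hg.tendsto_ae_condExp (ℱ := ℱ) hgm
  filter_upwards [hconv] with ω hω
  constructor
  · intro hGlob
    have h0 : (FEv B).indicator (fun _ => (1 : ℝ)) ω = 0 := by
      apply Set.indicator_of_notMem
      rintro ⟨k, hk⟩
      exact hGlob k hk
    rwa [h0] at hω
  · intro htend
    intro k
    by_contra hk
    simp only [mem_compl_iff, not_not] at hk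
    have h1 : (FEv B).indicator (fun _ => (1 : ℝ)) ω = 1 :=
      Set.indicator_of_mem (show ω ∈ FEv B from ⟨k, hk⟩) _
    rw [h1] at hω
    exact one_ne_zero (tendsto_nhds_unique hω htend)

end STS
end
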